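/- Let N be a positive integer and μ, ε > 0 real. Let D₁, D₂, D₃ be pairwise commuting skew-symmetric real N×N matrices, 𝔻 := [[0, −D₃, D₂], [D₃, 0, −D₁], [−D₂, D₁, 0]] (3N×3N), and 𝒟 := (1/√(με))·[[0, −𝔻], [𝔻, 0]] (6N×6N). Let J be the 6N×6N block matrix [[0, I_{3N}], [−I_{3N}, 0]]. Then for every real t, exp(t𝒟)ᵀ · J · exp(t𝒟) = J. Equivalently, if two pairs (H^t, E^t) and (H̄^t, Ē^t) are both propagated by (√μ·H^t, √ε·E^t) = exp(t𝒟)·(√μ·H⁰, √ε·E⁰), then ⟨H^t, Ē^t⟩ − ⟨E^t, H̄^t⟩ = ⟨H⁰, Ē⁰⟩ − ⟨E⁰, H̄⁰⟩ for all t. -/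

import Mathlib

open Matrix

/-- A `3N × 3N` block matrix built from a `3 × 3` array of `N × N` blocks. -/
def blockMat3 {N : ℕ} {α : Type*} (A : Fin 3 → Fin 3 → Matrix (Fin N) (Fin N) α) :
    Matrix (Fin 3 × Fin N) (Fin 3 × Fin N) α :=
  Matrix.of fun p q => A p.1 q.1 p.2 q.2

/-- The `3N × 3N` block-diagonal matrix with each diagonal block equal to `D`. -/
def blockDiag3 {N : ℕ} {α : Type*} [Zero α] (D : Matrix (Fin N) (Fin N) α) :
    Matrix (Fin 3 × Fin N) (Fin 3 × Fin N) α :=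
  Matrix.of fun p q => if p.1 = q.1 then D p.2 q.2 else 0

section aux

variable {n : Type*} [Fintype n] [DecidableEq n]

lemma aux_dot_mulVec (M : Matrix n n ℝ) (u w : n → ℝ) :
    M.mulVec u ⬝ᵥ w = u ⬝ᵥ Mᵀ.mulVec w := by
  conv_rhs => rw [Matrix.dotProduct_mulVec, Matrix.vecMul_transpose]

lemma aux_symp (M J : Matrix n n ℝ) (h : Mᵀ * J * M = J) (u v : n → ℝ) :
    M.mulVec u ⬝ᵥ J.mulVec (M.mulVec v) = u ⬝ᵥ J.mulVec v := by
  rw [aux_dot_mulVec, Matrix.mulVec_mulVec, Matrix.mulVec_mulVec, h]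

lemma blockMat3_transpose {N : ℕ} (A : Fin 3 → Fin 3 → Matrix (Fin N) (Fin N) ℝ) :
    (blockMat3 A)ᵀ = blockMat3 fun i j => (A j i)ᵀ := rfl

end aux

/-- the flow `exp(t𝒟)` of the fully discrete exponential scheme is symplectic: `exp(t𝒟)ᵀ J exp(t𝒟) = J`; equivalently, `⟨Hᵗ, Ēᵗ⟩ - ⟨Eᵗ, H̄ᵗ⟩` is constant along any two propagated pairs. -/
theorem discrete_symplecticity_conservation {N : ℕ} (hN : 0 < N) (μ ε : ℝ) (hμ : 0 < μ) (hε : 0 < ε)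
    (D1 D2 D3 : Matrix (Fin N) (Fin N) ℝ)
    (h12 : D1 * D2 = D2 * D1) (h13 : D1 * D3 = D3 * D1) (h23 : D2 * D3 = D3 * D2)
    (hD1 : D1ᵀ = -D1) (hD2 : D2ᵀ = -D2) (hD3 : D3ᵀ = -D3)
    (𝔻 : Matrix (Fin 3 × Fin N) (Fin 3 × Fin N) ℝ)
    (h𝔻 : 𝔻 = blockMat3 ![![0, -D3, D2], ![D3, 0, -D1], ![-D2, D1, 0]])
    (𝒟 : Matrix ((Fin 3 × Fin N) ⊕ (Fin 3 × Fin N)) ((Fin 3 × Fin N) ⊕ (Fin 3 × Fin N)) ℝ)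
    (h𝒟 : 𝒟 = (Real.sqrt (μ * ε))⁻¹ • Matrix.fromBlocks 0 (-𝔻) 𝔻 0)
    (H E : ℝ → (Fin 3 × Fin N → ℝ))
    (hprop : ∀ t : ℝ,
      Sum.elim (fun i => Real.sqrt μ * H t i) (fun i => Real.sqrt ε * E t i) =
        (NormedSpace.exp (t • 𝒟)).mulVec
          (Sum.elim (fun i => Real.sqrt μ * H 0 i) (fun i => Real.sqrt ε * E 0 i)))
    (J : Matrix ((Fin 3 × Fin N) ⊕ (Fin 3 × Fin N)) ((Fin 3 × Fin N) ⊕ (Fin 3 × Fin N)) ℝ)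
    (hJ : J = Matrix.fromBlocks 0 1 (-1) 0)
    (Hb Eb : ℝ → (Fin 3 × Fin N → ℝ))
    (hpropb : ∀ t : ℝ,
      Sum.elim (fun i => Real.sqrt μ * Hb t i) (fun i => Real.sqrt ε * Eb t i) =
        (NormedSpace.exp (t • 𝒟)).mulVec
          (Sum.elim (fun i => Real.sqrt μ * Hb 0 i) (fun i => Real.sqrt ε * Eb 0 i))) :
    (∀ t : ℝ, (NormedSpace.exp (t • 𝒟))ᵀ * J * NormedSpace.exp (t • 𝒟) = J) ∧
    (∀ t : ℝ,
      H t ⬝ᵥ Eb t - E t ⬝ᵥ Hb t = H 0 ⬝ᵥ Eb 0 - E 0 ⬝ᵥ Hb 0) := by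
  -- 𝔻 is symmetric
  have hDsym : 𝔻ᵀ = 𝔻 := by
    have hA : (fun i j => ((![![0, -D3, D2], ![D3, 0, -D1], ![-D2, D1, 0]]) j i)ᵀ) =
        ![![0, -D3, D2], ![D3, 0, -D1], ![-D2, D1, 0]] := by
      funext i j
      fin_cases i <;> fin_cases j <;>
        simp [hD1, hD2, hD3, Matrix.transpose_neg, Matrix.transpose_zero]
    rw [h𝔻, blockMat3_transpose, hA]
  -- 𝒟 is skew
  have hfbneg : -(Matrix.fromBlocks 0 (-𝔻) 𝔻 0) =
      (Matrix.fromBlocks 0 𝔻 (-𝔻) 0 :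
        Matrix ((Fin 3 × Fin N) ⊕ (Fin 3 × Fin N)) ((Fin 3 × Fin N) ⊕ (Fin 3 × Fin N)) ℝ) := by
    ext (i | i) (j | j) <;> simp [Matrix.fromBlocks]
  have hskew : 𝒟ᵀ = -𝒟 := by
    rw [h𝒟, Matrix.transpose_smul, Matrix.fromBlocks_transpose, ← smul_neg, hfbneg]
    simp [hDsym, Matrix.transpose_neg]
  -- J is a unit with inverse -J, and J commutes with 𝒟
  have hJJ : J * (-J) = 1 := by
    subst hJ
    simp [Matrix.fromBlocks_multiply, Matrix.fromBlocks_neg, ← Matrix.fromBlocks_one]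
  have hJJ' : (-J) * J = 1 := by
    subst hJ
    simp [Matrix.fromBlocks_multiply, Matrix.fromBlocks_neg, ← Matrix.fromBlocks_one]
  have hcomm : J * 𝒟 = 𝒟 * J := by
    rw [hJ, h𝒟]
    simp [Matrix.mul_smul, Matrix.smul_mul, Matrix.fromBlocks_multiply]
  -- the unit J
  let U : (Matrix ((Fin 3 × Fin N) ⊕ (Fin 3 × Fin N)) ((Fin 3 × Fin N) ⊕ (Fin 3 × Fin N)) ℝ)ˣ :=
    ⟨J, -J, hJJ, hJJ'⟩
  -- part 1
  have part1 : ∀ t : ℝ, (NormedSpace.exp (t • 𝒟))ᵀ * J * NormedSpace.exp (t • 𝒟) = J := by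
    intro t
    have htrans : (NormedSpace.exp (t • 𝒟))ᵀ = NormedSpace.exp (-(t • 𝒟)) := by
      rw [← Matrix.exp_transpose]
      congr 1
      rw [Matrix.transpose_smul, hskew, smul_neg]
    have hJ2 : J * J = -1 := by
      have h := hJJ
      rw [mul_neg] at h
      exact neg_eq_iff_eq_neg.mp h
    have hUc : (U : Matrix _ _ ℝ) * (-(t • 𝒟)) * (↑U⁻¹ : Matrix _ _ ℝ) = -(t • 𝒟) := by
      show J * (-(t • 𝒟)) * (-J) = -(t • 𝒟)
      simp only [mul_neg, neg_mul, neg_neg]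
      rw [Matrix.mul_smul, Matrix.smul_mul, hcomm, Matrix.mul_assoc, hJ2, mul_neg_one, smul_neg]
    have hconj : NormedSpace.exp (-(t • 𝒟)) * J = J * NormedSpace.exp (-(t • 𝒟)) := by
      have hc := Matrix.exp_units_conj U (-(t • 𝒟))
      rw [hUc] at hc
      conv_lhs => rw [hc]
      show J * NormedSpace.exp (-(t • 𝒟)) * (-J) * J = _
      rw [Matrix.mul_assoc (J * NormedSpace.exp (-(t • 𝒟))) (-J) J, hJJ', Matrix.mul_one]
    rw [htrans, hconj, Matrix.mul_assoc,
      ← Matrix.exp_add_of_commute (-(t • 𝒟)) (t • 𝒟) (Commute.neg_left (Commute.refl _)),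
      neg_add_cancel, NormedSpace.exp_zero, Matrix.mul_one]
  refine ⟨part1, ?_⟩
  -- part 2
  intro t
  have key : ∀ s : ℝ,
      Sum.elim (fun i => Real.sqrt μ * H s i) (fun i => Real.sqrt ε * E s i) ⬝ᵥ
        J.mulVec (Sum.elim (fun i => Real.sqrt μ * Hb s i) (fun i => Real.sqrt ε * Eb s i)) =
      Real.sqrt μ * Real.sqrt ε * (H s ⬝ᵥ Eb s - E s ⬝ᵥ Hb s) := by
    intro s
    have dotsc : ∀ (a b : ℝ) (u v : Fin 3 × Fin N → ℝ),
        (fun i => a * u i) ⬝ᵥ (fun i => b * v i) = a * b * (u ⬝ᵥ v) := by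
      intro a b u v
      simp only [dotProduct, Finset.mul_sum]
      exact Finset.sum_congr rfl fun x _ => by ring
    rw [hJ, Matrix.fromBlocks_mulVec]
    simp only [Matrix.zero_mulVec, Matrix.one_mulVec, Matrix.neg_mulVec, zero_add, add_zero,
      Sum.elim_comp_inl, Sum.elim_comp_inr]
    rw [sumElim_dotProduct_sumElim, dotProduct_neg, dotsc, dotsc]
    ring
  have main : Real.sqrt μ * Real.sqrt ε * (H t ⬝ᵥ Eb t - E t ⬝ᵥ Hb t) =
      Real.sqrt μ * Real.sqrt ε * (H 0 ⬝ᵥ Eb 0 - E 0 ⬝ᵥ Hb 0) := by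
    rw [← key t, ← key 0, hprop t, hpropb t]
    exact aux_symp _ _ (part1 t) _ _
  have hpos : Real.sqrt μ * Real.sqrt ε ≠ 0 := by
    positivity
  exact mul_left_cancel₀ hpos main
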